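/- Let x > 2 be a real number and let C′₁ = {z ∈ ℂ : |z − (x/2 + i)| = x/2 − 1}. Then the composition a_x ∘ b, where b(z) = z/(1−z) and a_x(z) = z + x, maps C′₁ into itself: for every z with |z − (x/2 + i)| = x/2 − 1 one has |z/(1−z) + x − (x/2 + i)| = x/2 − 1. -/

import Mathlib

open Complex

/-- For `x > 2`, the composition `a_x ∘ b : z ↦ z/(1-z) + x` maps the circle of
center `x/2 + i` and radius `x/2 - 1` into itself. -/
theorem ax_comp_b_maps_C1'_into_itself
    (x : ℝ) (hx : 2 < x) (z : ℂ)
    (hz : ‖z - (x / 2 + I)‖ = x / 2 - 1) :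
    ‖z / (1 - z) + x - (x / 2 + I)‖ = x / 2 - 1 := by
  have hr : (0:ℝ) < x/2 - 1 := by linarith
  have hz2 : Complex.normSq (z - (x/2 + I)) = (x/2-1)^2 := by
    rw [← Complex.sq_norm, hz]
  have hre : (z.re - x/2)^2 + (z.im - 1)^2 = (x/2-1)^2 := by
    simp [Complex.normSq_apply, Complex.sub_re, Complex.sub_im, Complex.add_re,
      Complex.add_im, Complex.I_re, Complex.I_im, Complex.ofReal_re, Complex.ofReal_im] at hz2
    nlinarith [hz2]
  have hz1 : (1 : ℂ) - z ≠ 0 := by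
    intro h
    have h1 : z = 1 := by linear_combination -h
    rw [h1] at hre
    simp at hre
    nlinarith [sq_nonneg (x/2)]
  have key : z / (1 - z) + x - (x/2 + I)
      = (1 + ((x/2 - 1 : ℝ) - I) * (1 - z)) / (1 - z) := by
    field_simp
    push_cast
    ring
  rw [key, norm_div]
  have h1 : Complex.normSq (1 + (((x/2 - 1 : ℝ) : ℂ) - I) * (1 - z))
      = ((x/2-1) * ‖1 - z‖)^2 := by
    rw [mul_pow, Complex.sq_norm]
    simp [Complex.normSq_apply, Complex.add_re, Complex.add_im, Complex.mul_re,
      Complex.mul_im, Complex.sub_re, Complex.sub_im, Complex.one_re, Complex.one_im,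
      Complex.I_re, Complex.I_im, Complex.ofReal_re, Complex.ofReal_im]
    nlinarith [hre]
  have hnum : ‖1 + (((x/2 - 1 : ℝ) : ℂ) - I) * (1 - z)‖
      = (x/2 - 1) * ‖1 - z‖ := by
    rw [Complex.norm_def, h1, Real.sqrt_sq (by positivity)]
  rw [hnum, mul_div_assoc, div_self (norm_ne_zero_iff.mpr hz1), mul_one]
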